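/- arXiv:0711.3557 — 2 statements merged into one kernel-verified Lean document; each statement's English description precedes it below -/
import Mathlib

section
/- Let $\mu$ be a finite positive Borel measure on the unit circle $\mathbb{T}$ and let $0 < p < 1$. Then the Cauchy transform $F(z) = \int_{\mathbb{T}} \frac{1}{\zeta - z}\, d\mu(\zeta)$, analytic on the open unit disk, belongs to the Hardy class $H^p(\mathbb{D})$, i.e., $\sup_{0 \le r < 1} \int_0^{2\pi} |F(re^{i\theta})|^p \, d\theta < \infty$. -/
noncomputable section

open MeasureTheory
open scoped ENNReal

open Metric Complex
open scoped Real

namespace Smirnov13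

lemma ae_circle {μ : Measure ℂ} (hsupp : μ {z : ℂ | ‖z‖ ≠ 1} = 0) :
    ∀ᵐ ζ ∂μ, ‖ζ‖ = 1 := by
  rw [ae_iff]; convert hsupp using 2

lemma norm_inv_le {ζ z : ℂ} (hζ : ‖ζ‖ = 1) (hz : ‖z‖ < 1) :
    ‖(ζ - z)⁻¹‖ ≤ (1 - ‖z‖)⁻¹ := by
  rw [norm_inv]
  have h1 : 1 - ‖z‖ ≤ ‖ζ - z‖ := by
    have := norm_sub_norm_le ζ z
    rw [hζ] at this; linarith
  exact inv_anti₀ (by linarith) h1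

lemma sub_ne {ζ z : ℂ} (hζ : ‖ζ‖ = 1) (hz : ‖z‖ < 1) : ζ - z ≠ 0 := by
  intro h
  rw [sub_eq_zero] at h
  rw [h] at hζ
  exact absurd hζ (by linarith)

variable {μ : Measure ℂ} [IsFiniteMeasure μ]

lemma integrable_aux (hsupp : μ {z : ℂ | ‖z‖ ≠ 1} = 0) {a : ℂ → ℂ} (ha : Measurable a)
    (hab : ∀ ζ, ‖ζ‖ = 1 → ‖a ζ‖ ≤ 1) {z : ℂ} (hz : ‖z‖ < 1) :
    Integrable (fun ζ => a ζ * (ζ - z)⁻¹) μ := by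
  refine Integrable.mono' (integrable_const ((1 - ‖z‖)⁻¹)) ?_ ?_
  · exact (ha.mul ((measurable_id.sub_const z).inv)).aestronglyMeasurable
  · filter_upwards [ae_circle hsupp] with ζ hζ
    rw [norm_mul]
    calc ‖a ζ‖ * ‖(ζ - z)⁻¹‖ ≤ 1 * (1 - ‖z‖)⁻¹ := by
          apply mul_le_mul (hab ζ hζ) (norm_inv_le hζ hz) (norm_nonneg _) zero_le_one
      _ = (1 - ‖z‖)⁻¹ := one_mul _

/-- derivative of the parametric integral -/
lemma hasDerivAt_int (hsupp : μ {z : ℂ | ‖z‖ ≠ 1} = 0) {a : ℂ → ℂ} (ha : Measurable a)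
    (hab : ∀ ζ, ‖ζ‖ = 1 → ‖a ζ‖ ≤ 1) {z₀ : ℂ} (hz₀ : ‖z₀‖ < 1) :
    HasDerivAt (fun z => ∫ ζ, a ζ * (ζ - z)⁻¹ ∂μ)
      (∫ ζ, a ζ * ((ζ - z₀) ^ 2)⁻¹ ∂μ) z₀ := by
  set ε := (1 - ‖z₀‖) / 2 with hε
  have hε_pos : 0 < ε := half_pos (by linarith)
  have hρ : ∀ x ∈ ball z₀ ε, ‖x‖ < 1 := by
    intro x hx
    rw [mem_ball, dist_eq_norm] at hx
    calc ‖x‖ = ‖x - z₀ + z₀‖ := by ring_nf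
      _ ≤ ‖x - z₀‖ + ‖z₀‖ := norm_add_le _ _
      _ < ε + ‖z₀‖ := by linarith
      _ < 1 := by rw [hε]; linarith
  have hρ2 : ∀ x ∈ ball z₀ ε, 1 - ‖x‖ > ε := by
    intro x hx
    rw [mem_ball, dist_eq_norm] at hx
    have : ‖x‖ ≤ ‖x - z₀‖ + ‖z₀‖ := by
      calc ‖x‖ = ‖x - z₀ + z₀‖ := by ring_nf
        _ ≤ ‖x - z₀‖ + ‖z₀‖ := norm_add_le _ _
    rw [hε] at *; linarith
  refine (hasDerivAt_integral_of_dominated_loc_of_deriv_le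
    (F := fun z ζ => a ζ * (ζ - z)⁻¹) (F' := fun z ζ => a ζ * ((ζ - z) ^ 2)⁻¹)
    (bound := fun _ => (ε ^ 2)⁻¹) (ball_mem_nhds z₀ hε_pos) ?_ (integrable_aux hsupp ha hab hz₀) ?_ ?_ (integrable_const _) ?_).2
  · filter_upwards with x
    exact (ha.mul ((measurable_id.sub_const x).inv)).aestronglyMeasurable
  · exact (ha.mul (((measurable_id.sub_const z₀).pow_const 2).inv)).aestronglyMeasurable
  · filter_upwards [ae_circle hsupp] with ζ hζ x hx
    have h1 : 1 - ‖x‖ ≤ ‖ζ - x‖ := by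
      have := norm_sub_norm_le ζ x
      rw [hζ] at this; linarith
    have h2 := hρ2 x hx
    rw [norm_mul, norm_inv, norm_pow]
    calc ‖a ζ‖ * (‖ζ - x‖ ^ 2)⁻¹ ≤ 1 * (ε ^ 2)⁻¹ := by
          apply mul_le_mul (hab ζ hζ) _ (by positivity) zero_le_one
          apply inv_anti₀ (by positivity)
          apply pow_le_pow_left₀ (by positivity) (by linarith)
      _ = (ε ^ 2)⁻¹ := one_mul _
  · filter_upwards [ae_circle hsupp] with ζ hζ x hx
    have hne : ζ - x ≠ 0 := sub_ne hζ (hρ x hx)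
    have h1 : HasDerivAt (fun y : ℂ => ζ - y) (-1) x := by
      simpa using ((hasDerivAt_id x).const_sub ζ)
    have h2 := h1.inv hne
    have : -(-1) / (ζ - x) ^ 2 = ((ζ - x) ^ 2)⁻¹ := by
      rw [neg_neg, one_div]
    rw [this] at h2
    exact h2.const_mul (a ζ)

/-- lower bound for the real part of ζ/(ζ-z) -/
lemma re_ge {ζ z : ℂ} (hζ : ‖ζ‖ = 1) (hz : ‖z‖ < 1) :
    (1 - ‖z‖) / 4 ≤ (ζ * (ζ - z)⁻¹).re := by
  have hne : ζ - z ≠ 0 := sub_ne hζ hz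
  have hsq : Complex.normSq (ζ - z) = ‖ζ - z‖ ^ 2 := by
    rw [Complex.normSq_eq_norm_sq]
  have hden_pos : 0 < Complex.normSq (ζ - z) := Complex.normSq_pos.2 hne
  have hden_le : Complex.normSq (ζ - z) ≤ 4 := by
    rw [hsq]
    have : ‖ζ - z‖ ≤ 2 := by
      calc ‖ζ - z‖ ≤ ‖ζ‖ + ‖z‖ := norm_sub_le _ _
        _ ≤ 2 := by rw [hζ]; linarith
    nlinarith [norm_nonneg (ζ - z)]
  have hkey : (ζ * (ζ - z)⁻¹).re = (ζ * starRingEnd ℂ (ζ - z)).re / Complex.normSq (ζ - z) := by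
    rw [Complex.inv_def, ← mul_assoc]
    rw [mul_comm (ζ * starRingEnd ℂ (ζ - z)) _]
    rw [Complex.re_ofReal_mul]
    field_simp
  have hnum : 1 - ‖z‖ ≤ (ζ * starRingEnd ℂ (ζ - z)).re := by
    have : ζ * starRingEnd ℂ (ζ - z) = (Complex.normSq ζ : ℂ) - ζ * starRingEnd ℂ z := by
      rw [map_sub, mul_sub, Complex.mul_conj]
    rw [this]
    have h1 : Complex.normSq ζ = 1 := by
      rw [Complex.normSq_eq_norm_sq, hζ]; norm_num
    have h2 : (ζ * starRingEnd ℂ z).re ≤ ‖z‖ := by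
      calc (ζ * starRingEnd ℂ z).re ≤ ‖ζ * starRingEnd ℂ z‖ := Complex.re_le_norm _
        _ = ‖z‖ := by
            rw [norm_mul, Complex.norm_conj, hζ,
              one_mul]
    rw [Complex.sub_re, Complex.ofReal_re, h1]
    linarith
  rw [hkey]
  rw [div_le_div_iff₀ (by norm_num) hden_pos]
  calc (1 - ‖z‖) * Complex.normSq (ζ - z) ≤ (1 - ‖z‖) * 4 := by
        apply mul_le_mul_of_nonneg_left hden_le (by linarith)
    _ = (ζ * starRingEnd ℂ (ζ - z)).re * 4 - ((ζ * starRingEnd ℂ (ζ - z)).re - (1 - ‖z‖)) * 4 := by ring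
    _ ≤ (ζ * starRingEnd ℂ (ζ - z)).re * 4 := by nlinarith

/-- sector lemma: for `w` in the right half plane, `cos (pπ/2) * |w|^p ≤ Re (w^p)`. -/
lemma sector {p : ℝ} (hp0 : 0 < p) (hp1 : p < 1) {w : ℂ} (hw : 0 < w.re) :
    Real.cos (p * (π / 2)) * ‖w‖ ^ p ≤ (w ^ (p : ℂ)).re := by
  have hw0 : w ≠ 0 := by
    intro h; rw [h] at hw; simp at hw
  have habs : 0 < ‖w‖ := norm_pos_iff.mpr hw0
  have harg : |Complex.arg w| < π / 2 := Complex.abs_arg_lt_pi_div_two_iff.2 (Or.inl hw)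
  rw [Complex.cpow_def_of_ne_zero hw0]
  rw [Complex.exp_re]
  have h1 : (Complex.log w * (p : ℂ)).re = Real.log ‖w‖ * p := by
    simp [Complex.log_re]
  have h2 : (Complex.log w * (p : ℂ)).im = Complex.arg w * p := by
    simp [Complex.log_im]
  rw [h1, h2]
  have h3 : Real.exp (Real.log ‖w‖ * p) = ‖w‖ ^ p := by
    rw [Real.rpow_def_of_pos habs]
  rw [h3]
  have hcos : Real.cos (p * (π / 2)) ≤ Real.cos (Complex.arg w * p) := by
    rw [← Real.cos_abs (Complex.arg w * p)]
    apply Real.cos_le_cos_of_nonneg_of_le_pi (abs_nonneg _)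
    · calc p * (π / 2) ≤ 1 * (π / 2) := by
            apply mul_le_mul_of_nonneg_right hp1.le (by positivity)
        _ ≤ π := by linarith [Real.pi_pos]
    · rw [abs_mul, abs_of_pos hp0, mul_comm]
      apply mul_le_mul_of_nonneg_left harg.le hp0.le
  calc Real.cos (p * (π / 2)) * ‖w‖ ^ p ≤ Real.cos (Complex.arg w * p) * ‖w‖ ^ p := by
        apply mul_le_mul_of_nonneg_right hcos (Real.rpow_nonneg (norm_nonneg w) p)
    _ = ‖w‖ ^ p * Real.cos (Complex.arg w * p) := by
        rw [mul_comm]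

lemma cos_pos {p : ℝ} (hp0 : 0 < p) (hp1 : p < 1) : 0 < Real.cos (p * (π / 2)) := by
  apply Real.cos_pos_of_mem_Ioo
  constructor
  · calc -(π/2) < 0 := by linarith [Real.pi_pos]
      _ < p * (π/2) := by positivity
  · calc p * (π/2) < 1 * (π/2) := by
          apply mul_lt_mul_of_pos_right hp1 (by positivity)
      _ = π/2 := one_mul _

variable (μ) in
/-- The Cauchy transform. -/
def Fc (z : ℂ) : ℂ := ∫ ζ, (ζ - z)⁻¹ ∂μ

variable (μ) in
/-- The auxiliary Herglotz-type transform. -/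
def Gc (z : ℂ) : ℂ := ∫ ζ, ζ * (ζ - z)⁻¹ ∂μ

lemma Gc_diff (hsupp : μ {z : ℂ | ‖z‖ ≠ 1} = 0) {z : ℂ} (hz : ‖z‖ < 1) :
    DifferentiableAt ℂ (Gc μ) z := by
  have := hasDerivAt_int (μ := μ) hsupp (a := fun ζ => ζ) measurable_id
    (fun ζ hζ => le_of_eq hζ) hz
  exact this.differentiableAt

lemma Fc_diff (hsupp : μ {z : ℂ | ‖z‖ ≠ 1} = 0) {z : ℂ} (hz : ‖z‖ < 1) :
    DifferentiableAt ℂ (Fc μ) z := by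
  have h1 : Fc μ = fun z => ∫ ζ, (fun _ : ℂ => (1:ℂ)) ζ * (ζ - z)⁻¹ ∂μ := by
    funext w; unfold Fc; congr 1; funext ζ; rw [one_mul]
  rw [h1]
  exact (hasDerivAt_int (μ := μ) hsupp (a := fun _ => (1:ℂ)) measurable_const
    (fun ζ _ => by norm_num) hz).differentiableAt

lemma Gc_re_ge (hsupp : μ {z : ℂ | ‖z‖ ≠ 1} = 0) {z : ℂ} (hz : ‖z‖ < 1) :
    (μ Set.univ).toReal * ((1 - ‖z‖) / 4) ≤ (Gc μ z).re := by
  have hint : Integrable (fun ζ => ζ * (ζ - z)⁻¹) μ :=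
    integrable_aux hsupp measurable_id (fun ζ hζ => le_of_eq hζ) hz
  have h1 : (Gc μ z).re = ∫ ζ, (ζ * (ζ - z)⁻¹).re ∂μ := by
    unfold Gc
    rw [← RCLike.re_to_complex, ← integral_re hint]
    simp
  rw [h1]
  calc (μ Set.univ).toReal * ((1 - ‖z‖) / 4)
      = ∫ _ζ : ℂ, (1 - ‖z‖) / 4 ∂μ := by rw [integral_const]; simp [smul_eq_mul, Measure.real]
    _ ≤ ∫ ζ, (ζ * (ζ - z)⁻¹).re ∂μ := by
        apply integral_mono_ae (integrable_const _) hint.re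
        filter_upwards [ae_circle hsupp] with ζ hζ
        exact re_ge hζ hz

lemma Fc_eq (hsupp : μ {z : ℂ | ‖z‖ ≠ 1} = 0) {z : ℂ} (hz : ‖z‖ < 1) (hz0 : z ≠ 0) :
    Fc μ z = z⁻¹ * (Gc μ z - ((μ Set.univ).toReal : ℂ)) := by
  have hint : Integrable (fun ζ => ζ * (ζ - z)⁻¹) μ :=
    integrable_aux hsupp measurable_id (fun ζ hζ => le_of_eq hζ) hz
  have h1 : Fc μ z = ∫ ζ, z⁻¹ * (ζ * (ζ - z)⁻¹ - 1) ∂μ := by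
    unfold Fc
    apply integral_congr_ae
    filter_upwards [ae_circle hsupp] with ζ hζ
    have hne : ζ - z ≠ 0 := sub_ne hζ hz
    field_simp
    ring
  rw [h1, integral_const_mul]
  congr 1
  rw [integral_sub hint (integrable_const 1), integral_const]
  simp [smul_eq_mul]
  rfl

lemma Fc_bound (hsupp : μ {z : ℂ | ‖z‖ ≠ 1} = 0) {z : ℂ} (hz : ‖z‖ < 1) :
    ‖Fc μ z‖ ≤ 2 * (‖Gc μ z‖ + (μ Set.univ).toReal) := by
  set M := (μ Set.univ).toReal with hM
  have hM0 : 0 ≤ M := ENNReal.toReal_nonneg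
  by_cases hhalf : ‖z‖ ≤ 1 / 2
  · have : ‖Fc μ z‖ ≤ 2 * M := by
      unfold Fc
      apply norm_integral_le_of_norm_le_const
      filter_upwards [ae_circle hsupp] with ζ hζ
      calc ‖(ζ - z)⁻¹‖ ≤ (1 - ‖z‖)⁻¹ := norm_inv_le hζ hz
        _ ≤ 2 := by
            rw [inv_le_comm₀ (by linarith) (by norm_num)]
            linarith
    calc ‖Fc μ z‖ ≤ 2 * M := this
      _ ≤ 2 * (‖Gc μ z‖ + M) := by
          have := norm_nonneg (Gc μ z); linarith
  · push_neg at hhalf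
    have hz0 : z ≠ 0 := by
      intro h; rw [h] at hhalf; simp at hhalf; linarith
    rw [Fc_eq hsupp hz hz0, norm_mul, norm_inv]
    calc ‖z‖⁻¹ * ‖Gc μ z - (M : ℂ)‖ ≤ 2 * ‖Gc μ z - (M : ℂ)‖ := by
          apply mul_le_mul_of_nonneg_right _ (norm_nonneg _)
          rw [inv_le_comm₀ (by linarith) (by norm_num)]
          linarith
      _ ≤ 2 * (‖Gc μ z‖ + M) := by
          apply mul_le_mul_of_nonneg_left _ (by norm_num)
          calc ‖Gc μ z - (M : ℂ)‖ ≤ ‖Gc μ z‖ + ‖(M : ℂ)‖ := norm_sub_le _ _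
            _ = ‖Gc μ z‖ + M := by rw [Complex.norm_real, Real.norm_of_nonneg hM0]

lemma M_pos (hμ : μ ≠ 0) : 0 < (μ Set.univ).toReal :=
  ENNReal.toReal_pos (Measure.measure_univ_pos.2 hμ).ne' (measure_ne_top μ _)

lemma Gc_re_pos (hsupp : μ {z : ℂ | ‖z‖ ≠ 1} = 0) (hμ : μ ≠ 0) {z : ℂ} (hz : ‖z‖ < 1) :
    0 < (Gc μ z).re := by
  have h1 := Gc_re_ge hsupp hz
  have h2 := M_pos hμ
  have h3 : 0 < (1 - ‖z‖) / 4 := by linarith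
  nlinarith

lemma g_diff (hsupp : μ {z : ℂ | ‖z‖ ≠ 1} = 0) (hμ : μ ≠ 0) {p : ℝ} {z : ℂ} (hz : ‖z‖ < 1) :
    DifferentiableAt ℂ (fun w => Gc μ w ^ (p : ℂ)) z :=
  (Gc_diff hsupp hz).cpow (differentiableAt_const _)
    (Complex.mem_slitPlane_iff.2 (Or.inl (Gc_re_pos hsupp hμ hz)))

lemma norm_circleMap {r : ℝ} (hr0 : 0 ≤ r) (θ : ℝ) : ‖circleMap 0 r θ‖ = r := by
  rw [norm_circleMap_zero, _root_.abs_of_nonneg hr0]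

lemma g_cont (hsupp : μ {z : ℂ | ‖z‖ ≠ 1} = 0) (hμ : μ ≠ 0) {p : ℝ} {r : ℝ}
    (hr0 : 0 ≤ r) (hr1 : r < 1) :
    Continuous (fun θ : ℝ => Gc μ (circleMap 0 r θ) ^ (p : ℂ)) := by
  rw [continuous_iff_continuousAt]
  intro θ
  have h1 : ‖circleMap 0 r θ‖ < 1 := by rw [norm_circleMap hr0]; exact hr1
  exact ((g_diff hsupp hμ (p := p) h1).continuousAt).comp (continuous_circleMap 0 r).continuousAt

lemma mean_value (hsupp : μ {z : ℂ | ‖z‖ ≠ 1} = 0) (hμ : μ ≠ 0) {p : ℝ}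
    {r : ℝ} (hr0 : 0 ≤ r) (hr1 : r < 1) :
    ∫ θ in Set.Ioc (0:ℝ) (2*π), (Gc μ (circleMap 0 r θ) ^ (p:ℂ)).re
      = 2 * π * (Gc μ 0 ^ (p:ℂ)).re := by
  set g : ℂ → ℂ := fun w => Gc μ w ^ (p : ℂ) with hg
  rcases eq_or_lt_of_le hr0 with hr | hr
  · simp only [← hr]
    have : ∀ θ : ℝ, circleMap 0 0 θ = 0 := by intro θ; simp [circleMap]
    simp only [this]
    rw [setIntegral_const, Measure.real, Real.volume_Ioc]
    rw [smul_eq_mul, ENNReal.toReal_ofReal (by simp; positivity)]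
    ring
  · -- 0 < r
    have hd : DiffContOnCl ℂ g (ball 0 r) := by
      constructor
      · intro z hz
        rw [mem_ball, dist_eq_norm, sub_zero] at hz
        exact (g_diff hsupp hμ (hz.trans hr1)).differentiableWithinAt
      · intro z hz
        have hz' : z ∈ closedBall (0:ℂ) r :=
          closure_minimal ball_subset_closedBall Metric.isClosed_closedBall hz
        rw [mem_closedBall, dist_eq_norm, sub_zero] at hz'
        exact (g_diff hsupp hμ (lt_of_le_of_lt hz' hr1)).continuousAt.continuousWithinAt
    have hcirc := hd.circleIntegral_sub_inv_smul (w := 0) (by simp [hr])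
    simp only [circleIntegral, deriv_circleMap, sub_zero] at hcirc
    have hint_eq : ∀ θ : ℝ, (circleMap 0 r θ * I) • ((circleMap 0 r θ)⁻¹ • g (circleMap 0 r θ))
        = I * g (circleMap 0 r θ) := by
      intro θ
      have hne : circleMap 0 r θ ≠ 0 := circleMap_ne_center (ne_of_gt hr)
      rw [smul_eq_mul, smul_eq_mul]
      field_simp
    rw [intervalIntegral.integral_congr (fun θ _ => hint_eq θ)] at hcirc
    rw [intervalIntegral.integral_const_mul] at hcirc
    have hI : (∫ θ in (0:ℝ)..(2*π), g (circleMap 0 r θ)) = 2 * (π:ℂ) * g 0 := by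
      apply mul_left_cancel₀ Complex.I_ne_zero
      rw [hcirc, smul_eq_mul]
      ring
    have hIoc : (∫ θ in Set.Ioc (0:ℝ) (2*π), g (circleMap 0 r θ)) = 2 * (π:ℂ) * g 0 := by
      rw [← hI, intervalIntegral.integral_of_le (by positivity)]
    have hint : IntegrableOn (fun θ : ℝ => g (circleMap 0 r θ)) (Set.Ioc (0:ℝ) (2*π)) := by
      apply (g_cont hsupp hμ hr0 hr1).integrableOn_Ioc
    calc (∫ θ in Set.Ioc (0:ℝ) (2*π), (g (circleMap 0 r θ)).re)
        = (∫ θ in Set.Ioc (0:ℝ) (2*π), g (circleMap 0 r θ)).re := by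
          rw [← RCLike.re_to_complex, ← integral_re hint]; simp
      _ = (2 * (π:ℂ) * g 0).re := by rw [hIoc]
      _ = 2 * π * (g 0).re := by
          have : 2 * (π:ℂ) = ((2 * π : ℝ) : ℂ) := by push_cast; ring
          rw [this, Complex.re_ofReal_mul]

lemma real_add_rpow {a b q : ℝ} (ha : 0 ≤ a) (hb : 0 ≤ b) (hq : 0 ≤ q) (hq1 : q ≤ 1) :
    (a + b) ^ q ≤ a ^ q + b ^ q := by
  have h := NNReal.coe_le_coe.2 (NNReal.rpow_add_le_add_rpow a.toNNReal b.toNNReal hq hq1)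
  push_cast at h
  rwa [Real.coe_toNNReal _ ha, Real.coe_toNNReal _ hb] at h

lemma Gc_zero (hsupp : μ {z : ℂ | ‖z‖ ≠ 1} = 0) :
    Gc μ 0 = ((μ Set.univ).toReal : ℂ) := by
  unfold Gc
  have h1 : (fun ζ : ℂ => ζ * (ζ - 0)⁻¹) =ᵐ[μ] fun _ => (1 : ℂ) := by
    filter_upwards [ae_circle hsupp] with ζ hζ
    have : ζ ≠ 0 := by
      intro h; rw [h] at hζ; simp at hζ
    field_simp
    simp
  rw [integral_congr_ae h1, integral_const]
  simp [smul_eq_mul, Measure.real]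

/-- pointwise key bound -/
lemma key_bound (hsupp : μ {z : ℂ | ‖z‖ ≠ 1} = 0) (hμ : μ ≠ 0) {p : ℝ}
    (hp0 : 0 < p) (hp1 : p < 1) {z : ℂ} (hz : ‖z‖ < 1) :
    ‖Fc μ z‖ ^ p ≤ 2 ^ p * ((Real.cos (p * (π / 2)))⁻¹ * (Gc μ z ^ (p:ℂ)).re
      + (μ Set.univ).toReal ^ p) := by
  set M := (μ Set.univ).toReal with hM
  set cc := Real.cos (p * (π / 2)) with hcc
  have hc_pos : 0 < cc := cos_pos hp0 hp1
  have hM0 : 0 ≤ M := ENNReal.toReal_nonneg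
  have hre : 0 < (Gc μ z).re := Gc_re_pos hsupp hμ hz
  have hsec := sector hp0 hp1 hre
  have h1 : ‖Gc μ z‖ ^ p ≤ cc⁻¹ * (Gc μ z ^ (p:ℂ)).re := by
    rw [← mul_le_mul_iff_right₀ hc_pos, ← mul_assoc, mul_inv_cancel₀ hc_pos.ne', one_mul]
    exact hsec
  calc ‖Fc μ z‖ ^ p ≤ (2 * (‖Gc μ z‖ + M)) ^ p := by
        apply Real.rpow_le_rpow (norm_nonneg _) (Fc_bound hsupp hz) hp0.le
    _ = 2 ^ p * (‖Gc μ z‖ + M) ^ p := by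
        rw [Real.mul_rpow (by norm_num) (by positivity)]
    _ ≤ 2 ^ p * (‖Gc μ z‖ ^ p + M ^ p) := by
        apply mul_le_mul_of_nonneg_left
          (real_add_rpow (norm_nonneg _) hM0 hp0.le hp1.le) (by positivity)
    _ ≤ 2 ^ p * (cc⁻¹ * (Gc μ z ^ (p:ℂ)).re + M ^ p) := by
        apply mul_le_mul_of_nonneg_left (by linarith) (by positivity)

lemma g_re_nonneg (hsupp : μ {z : ℂ | ‖z‖ ≠ 1} = 0) (hμ : μ ≠ 0) {p : ℝ}
    (hp0 : 0 < p) (hp1 : p < 1) {z : ℂ} (hz : ‖z‖ < 1) :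
    0 ≤ (Gc μ z ^ (p:ℂ)).re := by
  have hre : 0 < (Gc μ z).re := Gc_re_pos hsupp hμ hz
  have hsec := sector hp0 hp1 hre
  have := cos_pos hp0 hp1
  nlinarith [Real.rpow_nonneg (norm_nonneg (Gc μ z)) p]

end Smirnov13

open Smirnov13 in
/-- For a finite positive Borel measure `μ` on the unit circle and `0 < p < 1`, the Cauchy
transform `F(z) = ∫ (ζ - z)⁻¹ dμ(ζ)` is analytic on the open unit disk and belongs to the
Hardy class `H^p(𝔻)`: its `p`-means over circles of radius `r < 1` are uniformly bounded. -/
theorem stmt13 (p : ℝ) (hp0 : 0 < p) (hp1 : p < 1)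
    (μ : Measure ℂ) [IsFiniteMeasure μ]
    (hsupp : μ {z : ℂ | ‖z‖ ≠ 1} = 0) :
    DifferentiableOn ℂ (fun z : ℂ => ∫ ζ : ℂ, (ζ - z)⁻¹ ∂μ) (Metric.ball (0 : ℂ) 1) ∧
    ∃ C : ℝ, ∀ r : ℝ, 0 ≤ r → r < 1 →
      (∫⁻ θ in Set.Ioc (0 : ℝ) (2 * Real.pi),
          ENNReal.ofReal (‖∫ ζ : ℂ, (ζ - (r : ℂ) * Complex.exp (θ * Complex.I))⁻¹ ∂μ‖ ^ p))
        ≤ ENNReal.ofReal C := by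
  constructor
  · intro z hz
    rw [mem_ball, dist_eq_norm, sub_zero] at hz
    exact (Fc_diff hsupp hz).differentiableWithinAt
  · rcases eq_or_ne μ 0 with hμ | hμ
    · refine ⟨0, fun r hr0 hr1 => ?_⟩
      subst hμ
      simp [Real.zero_rpow hp0.ne']
    · set M := (μ Set.univ).toReal with hM
      set cc := Real.cos (p * (π / 2)) with hcc
      have hc_pos : 0 < cc := cos_pos hp0 hp1
      have hM_pos : 0 < M := M_pos hμ
      refine ⟨2 ^ p * (cc⁻¹ * (2 * π * M ^ p) + M ^ p * (2 * π)), fun r hr0 hr1 => ?_⟩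
      have hmap : ∀ θ : ℝ, (r : ℂ) * Complex.exp (θ * Complex.I) = circleMap 0 r θ := by
        intro θ; simp [circleMap]
      have hFc : ∀ θ : ℝ, (∫ ζ : ℂ, (ζ - (r : ℂ) * Complex.exp (θ * Complex.I))⁻¹ ∂μ)
          = Fc μ (circleMap 0 r θ) := by
        intro θ; rw [hmap θ]; rfl
      simp only [hFc]
      have hnorm : ∀ θ : ℝ, ‖circleMap 0 r θ‖ < 1 := by
        intro θ; rw [norm_circleMap hr0]; exact hr1
      -- pointwise ENNReal bound
      have hpt : ∀ θ : ℝ, ENNReal.ofReal (‖Fc μ (circleMap 0 r θ)‖ ^ p)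
          ≤ ENNReal.ofReal (2 ^ p) * (ENNReal.ofReal cc⁻¹
              * ENNReal.ofReal ((Gc μ (circleMap 0 r θ) ^ (p:ℂ)).re)
            + ENNReal.ofReal (M ^ p)) := by
        intro θ
        have h1 := key_bound hsupp hμ hp0 hp1 (hnorm θ)
        calc ENNReal.ofReal (‖Fc μ (circleMap 0 r θ)‖ ^ p)
            ≤ ENNReal.ofReal (2 ^ p * (cc⁻¹ * (Gc μ (circleMap 0 r θ) ^ (p:ℂ)).re + M ^ p)) :=
              ENNReal.ofReal_le_ofReal h1
          _ = _ := by
              rw [ENNReal.ofReal_mul (by positivity),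
                ENNReal.ofReal_add (mul_nonneg (by positivity) (g_re_nonneg hsupp hμ hp0 hp1 (hnorm θ))) (by positivity),
                ENNReal.ofReal_mul (by positivity)]
      have hcont : Continuous fun θ : ℝ => (Gc μ (circleMap 0 r θ) ^ (p:ℂ)).re :=
        Complex.continuous_re.comp (g_cont hsupp hμ hr0 hr1)
      have hmeas : Measurable fun θ : ℝ =>
          ENNReal.ofReal cc⁻¹ * ENNReal.ofReal ((Gc μ (circleMap 0 r θ) ^ (p:ℂ)).re) :=
        (measurable_const.mul (ENNReal.measurable_ofReal.comp hcont.measurable))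
      calc (∫⁻ θ in Set.Ioc (0 : ℝ) (2 * π),
              ENNReal.ofReal (‖Fc μ (circleMap 0 r θ)‖ ^ p))
          ≤ ∫⁻ θ in Set.Ioc (0 : ℝ) (2 * π),
              (ENNReal.ofReal (2 ^ p) * (ENNReal.ofReal cc⁻¹
                * ENNReal.ofReal ((Gc μ (circleMap 0 r θ) ^ (p:ℂ)).re)
                + ENNReal.ofReal (M ^ p))) := lintegral_mono fun θ => hpt θ
        _ = ENNReal.ofReal (2 ^ p) * ((ENNReal.ofReal cc⁻¹
              * ∫⁻ θ in Set.Ioc (0 : ℝ) (2 * π),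
                  ENNReal.ofReal ((Gc μ (circleMap 0 r θ) ^ (p:ℂ)).re))
            + ENNReal.ofReal (M ^ p) * ENNReal.ofReal (2 * π)) := by
            rw [lintegral_const_mul' _ _ ENNReal.ofReal_ne_top]
            congr 1
            rw [lintegral_add_right _ measurable_const]
            congr 1
            · rw [lintegral_const_mul' _ _ ENNReal.ofReal_ne_top]
            · rw [setLIntegral_const, Real.volume_Ioc, sub_zero]
        _ = ENNReal.ofReal (2 ^ p) * ((ENNReal.ofReal cc⁻¹
              * ENNReal.ofReal (2 * π * M ^ p))
            + ENNReal.ofReal (M ^ p) * ENNReal.ofReal (2 * π)) := by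
            congr 3
            have hInt : IntegrableOn (fun θ : ℝ => (Gc μ (circleMap 0 r θ) ^ (p:ℂ)).re)
                (Set.Ioc (0:ℝ) (2*π)) := hcont.integrableOn_Ioc
            rw [← ofReal_integral_eq_lintegral_ofReal hInt
              (Filter.Eventually.of_forall fun θ => g_re_nonneg hsupp hμ hp0 hp1 (hnorm θ))]
            rw [mean_value hsupp hμ hr0 hr1]
            congr 1
            rw [Gc_zero hsupp, ← hM]
            rw [← Complex.ofReal_cpow hM_pos.le]
            rw [Complex.ofReal_re]
        _ ≤ ENNReal.ofReal (2 ^ p * (cc⁻¹ * (2 * π * M ^ p) + M ^ p * (2 * π))) := by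
            rw [ENNReal.ofReal_mul (by positivity : (0:ℝ) ≤ 2 ^ p),
              ENNReal.ofReal_add (by positivity) (by positivity),
              ENNReal.ofReal_mul (by positivity : (0:ℝ) ≤ cc⁻¹),
              ENNReal.ofReal_mul (by positivity : (0:ℝ) ≤ M ^ p),
              ENNReal.ofReal_mul (by positivity : (0:ℝ) ≤ 2 * π),
              mul_comm (ENNReal.ofReal (2 * π)) (ENNReal.ofReal (M ^ p))]
end
end

section
/- Let $U$ be the bilateral shift on $\ell^2(\mathbb{Z})$, $R$ the diagonal operator with $R e_n = \rho_{|n|} e_n$, $\rho_n$ positive decreasing to $0$ with $\sum \rho_n = \infty$, and $T = \begin{pmatrix} U & R \\ 0 & U\end{pmatrix}$ on $H = \ell^2(\mathbb{Z})^2$. If $u = (u_1, u_2) \in H$ is such that the functions $\lambda \mapsto \langle (T - \lambda)^{-1} u, (e_j, 0)\rangle$ ($|\lambda| < 1$) all lie in $H^2(\mathbb{D})$ with norms bounded uniformly in $j \in \mathbb{Z}$, then $u_2 = 0$. -/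
noncomputable section

open scoped ENNReal
open scoped ComplexConjugate

/-- `ℓ²(ℤ)`. -/
abbrev Hl := lp (fun _ : ℤ => ℂ) 2

/-- Standard basis vectors of `ℓ²(ℤ)`. -/
def e (j : ℤ) : Hl := lp.single 2 j 1

/-- `H = ℓ²(ℤ) ⊕ ℓ²(ℤ)` (Hilbert direct sum). -/
abbrev H2 := WithLp 2 (Hl × Hl)

/-- Inclusion of pairs into the direct sum. -/
def pair (x : Hl × Hl) : H2 := (WithLp.equiv 2 (Hl × Hl)).symm x


lemma inner_e_left (i : ℤ) (f : Hl) : (inner ℂ (e i) f : ℂ) = f i := by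
  simp [e, lp.inner_single_left]

lemma inner_e_right (i : ℤ) (f : Hl) : (inner ℂ f (e i) : ℂ) = conj (f i) := by
  simp [e, lp.inner_single_right]

lemma hasSum_coord (f : Hl) : HasSum (fun i : ℤ => (f i) • e i) f := by
  have := lp.hasSum_single (E := fun _ : ℤ => ℂ) (p := 2) (by norm_num) f
  convert this using 2 with i
  ext j
  rw [lp.coeFn_smul, Pi.smul_apply]
  simp only [e]
  rw [lp.single_apply, lp.single_apply, Pi.single_apply, Pi.single_apply]
  split_ifs with h
  · subst h; simp
  · simp

/-- extensionality on basis vectors -/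
lemma clm_ext {F : Type*} [NormedAddCommGroup F] [NormedSpace ℂ F]
    (A B : Hl →L[ℂ] F) (h : ∀ i, A (e i) = B (e i)) : A = B := by
  ext f
  have hs := hasSum_coord f
  have hA : HasSum (fun i : ℤ => A ((f i) • e i)) (A f) := A.hasSum hs
  have hB : HasSum (fun i : ℤ => B ((f i) • e i)) (B f) := B.hasSum hs
  refine hA.unique ?_
  simpa only [map_smul, h] using hB

def coord (n : ℤ) : Hl →L[ℂ] ℂ := innerSL ℂ (e n)

lemma coord_apply (n : ℤ) (f : Hl) : coord n f = f n := by
  simp [coord, inner_e_left]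

lemma e_apply (i j : ℤ) : (e i : Hl) j = if j = i then 1 else 0 := by
  simp [e, lp.single_apply, Pi.single_apply]


lemma U_coord (U : Hl →L[ℂ] Hl) (hU : ∀ n : ℤ, U (e n) = e (n + 1))
    (f : Hl) (n : ℤ) : (U f : Hl) n = f (n - 1) := by
  have h : (coord n).comp U = coord (n - 1) := by
    apply clm_ext
    intro i
    simp only [ContinuousLinearMap.comp_apply, hU, coord_apply, e_apply]
    by_cases h : n = i + 1
    · rw [if_pos h, if_pos (by omega)]
    · rw [if_neg h, if_neg (by omega)]
  calc (U f : Hl) n = (coord n).comp U f := by rw [ContinuousLinearMap.comp_apply, coord_apply]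
  _ = f (n-1) := by rw [h, coord_apply]

lemma R_coord (ρ : ℕ → ℝ) (R : Hl →L[ℂ] Hl)
    (hR : ∀ n : ℤ, R (e n) = ((ρ n.natAbs : ℝ) : ℂ) • e n)
    (f : Hl) (n : ℤ) : (R f : Hl) n = ((ρ n.natAbs : ℝ) : ℂ) * f n := by
  have h : (coord n).comp R = ((ρ n.natAbs : ℝ) : ℂ) • coord n := by
    apply clm_ext
    intro i
    simp only [ContinuousLinearMap.comp_apply, hR, coord_apply,
      ContinuousLinearMap.smul_apply, map_smul, smul_eq_mul, e_apply]
    by_cases h : n = i <;> simp [h]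
  calc (R f : Hl) n = (coord n).comp R f := by rw [ContinuousLinearMap.comp_apply, coord_apply]
  _ = _ := by rw [h]; simp [coord_apply]

lemma norm_e (i : ℤ) : ‖e i‖ = 1 := by
  have := lp.norm_single (E := fun _ : ℤ => ℂ) (p := 2) (by norm_num) i (1:ℂ)
  simpa [e] using this

lemma summable_smul_e (c : ℕ → ℂ) (n : ℕ → ℤ) (hc : Summable c) :
    Summable (fun k => c k • e (n k)) := by
  apply Summable.of_norm
  simpa [norm_smul, norm_e] using hc.norm

lemma inner_vec (x : Hl) (c : ℕ → ℂ) (n : ℕ → ℤ) (hc : Summable c) :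
    (inner ℂ x (∑' k, c k • e (n k)) : ℂ) = ∑' k, c k * conj (x (n k)) := by
  have h1 := (innerSL ℂ x).map_tsum (summable_smul_e c n hc)
  rw [innerSL_apply_apply] at h1
  rw [h1]
  congr 1
  ext k
  simp [inner_smul_right, inner_e_right, mul_comm]

lemma coord_bound (f : Hl) (n : ℤ) : ‖f n‖ ≤ ‖f‖ :=
  lp.norm_apply_le_norm (by norm_num) f n

def sig (ρ : ℕ → ℝ) (j : ℤ) (k : ℕ) : ℝ := ∑ i ∈ Finset.range (k+1), ρ (j+1+i).natAbs

lemma sig_nonneg (ρ : ℕ → ℝ) (hpos : ∀ n, 0 < ρ n) (j : ℤ) (k : ℕ) : 0 ≤ sig ρ j k :=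
  Finset.sum_nonneg fun i _ => (hpos _).le

lemma sig_le (ρ : ℕ → ℝ) (hpos : ∀ n, 0 < ρ n) (hmono : Antitone ρ) (j : ℤ) (k : ℕ) :
    sig ρ j k ≤ (k+1) * ρ 0 := by
  calc sig ρ j k ≤ ∑ i ∈ Finset.range (k+1), ρ 0 :=
        Finset.sum_le_sum fun i _ => hmono (Nat.zero_le _)
  _ = (k+1) * ρ 0 := by simp [mul_comm]

lemma sig_succ (ρ : ℕ → ℝ) (j : ℤ) (k : ℕ) :
    sig ρ j (k+1) = sig ρ j k + ρ (j+2+k).natAbs := by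
  rw [sig, Finset.sum_range_succ]
  congr 2
  omega

lemma summable_geom_poly (l : ℂ) (hl : ‖l‖ < 1) (c : ℕ → ℂ) (M : ℝ)
    (hc : ∀ k, ‖c k‖ ≤ M * ((k:ℝ)+1)^2 * ‖l‖^k) : Summable c := by
  apply Summable.of_norm_bounded (g := fun k : ℕ => M * (((k:ℝ)+1)^2 * ‖l‖^k)) _ (fun k => by
    simpa [mul_assoc] using hc k)
  apply Summable.mul_left
  have h1 : Summable (fun k : ℕ => (k:ℝ)^2 * ‖l‖^k) :=
    summable_pow_mul_geometric_of_norm_lt_one 2 (by simpa using hl)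
  have h1' : Summable (fun k : ℕ => (k:ℝ)^1 * ‖l‖^k) :=
    summable_pow_mul_geometric_of_norm_lt_one 1 (by simpa using hl)
  have h2 : Summable (fun k : ℕ => ‖l‖^k) :=
    summable_geometric_of_lt_one (norm_nonneg l) hl
  have := (h1.add (h1'.mul_left 2)).add h2
  apply this.congr
  intro k
  ring

section w
open ComplexConjugate
variable (ρ : ℕ → ℝ)

def w1 (l : ℂ) (j : ℤ) : Hl := ∑' k : ℕ, ((conj l)^k : ℂ) • e (j+1+k)
def w2 (l : ℂ) (j : ℤ) : Hl :=
  ∑' k : ℕ, (-((conj l)^k * ((sig ρ j k : ℝ) : ℂ))) • e (j+2+k)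

lemma summable_w1c (l : ℂ) (hl : ‖l‖ < 1) : Summable (fun k : ℕ => ((conj l)^k : ℂ)) := by
  apply summable_geometric_of_norm_lt_one
  simpa using hl

lemma summable_w2c (hpos : ∀ n, 0 < ρ n) (hmono : Antitone ρ) (l : ℂ) (hl : ‖l‖ < 1) (j : ℤ) :
    Summable (fun k : ℕ => (-((conj l)^k * ((sig ρ j k : ℝ) : ℂ)))) := by
  apply summable_geom_poly l hl _ (ρ 0)
  intro k
  have h1 : ‖(-((conj l)^k * ((sig ρ j k : ℝ) : ℂ)))‖ = ‖l‖^k * sig ρ j k := by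
    rw [norm_neg, norm_mul, norm_pow, RCLike.norm_conj, Complex.norm_real,
      Real.norm_eq_abs, abs_of_nonneg (sig_nonneg ρ hpos j k)]
  rw [h1]
  calc ‖l‖^k * sig ρ j k ≤ ‖l‖^k * ((k+1) * ρ 0) := by
        apply mul_le_mul_of_nonneg_left (sig_le ρ hpos hmono j k) (by positivity)
  _ = ρ 0 * (k+1) * ‖l‖^k := by ring
  _ ≤ ρ 0 * ((k:ℝ)+1)^2 * ‖l‖^k := by
        have hk : ((k:ℝ)+1) ≤ ((k:ℝ)+1)^2 := by nlinarith [(Nat.cast_nonneg k : (0:ℝ) ≤ k)]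
        have : (0:ℝ) ≤ ρ 0 * ‖l‖^k := mul_nonneg (hpos 0).le (by positivity)
        nlinarith []

lemma inner_w1 (x : Hl) (l : ℂ) (hl : ‖l‖ < 1) (j : ℤ) :
    (inner ℂ x (w1 l j) : ℂ) = ∑' k : ℕ, (conj l)^k * conj (x (j+1+k)) :=
  inner_vec x _ _ (summable_w1c l hl)

lemma inner_w2 (hpos : ∀ n, 0 < ρ n) (hmono : Antitone ρ) (x : Hl) (l : ℂ) (hl : ‖l‖ < 1)
    (j : ℤ) :
    (inner ℂ x (w2 ρ l j) : ℂ)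
      = ∑' k : ℕ, (-((conj l)^k * ((sig ρ j k : ℝ) : ℂ))) * conj (x (j+2+k)) :=
  inner_vec x _ _ (summable_w2c ρ hpos hmono l hl j)

end w

lemma mul_bound (r p q P Q : ℝ) (hr : 0 ≤ r) (hp : 0 ≤ p) (hq : 0 ≤ q)
    (hP : p ≤ P) (hQ : q ≤ Q) (k : ℕ) : r * p * q ≤ P * Q * (k+1) * r := by
  have hP0 : 0 ≤ P := hp.trans hP
  have hQ0 : 0 ≤ Q := hq.trans hQ
  have h1 : p * q ≤ P * Q := mul_le_mul hP hQ hq hP0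
  have h2 : r * (p*q) ≤ r * (P*Q) := mul_le_mul_of_nonneg_left h1 hr
  have h3 : (1:ℝ) ≤ (k:ℝ)+1 := by
    have : (0:ℝ) ≤ (k:ℝ) := Nat.cast_nonneg k
    linarith
  nlinarith [mul_nonneg hr (mul_nonneg hP0 hQ0)]

set_option maxHeartbeats 1000000 in
open ComplexConjugate in
lemma key_identity (ρ : ℕ → ℝ) (hpos : ∀ n, 0 < ρ n) (hmono : Antitone ρ)
    (U R : Hl →L[ℂ] Hl)
    (hU : ∀ n : ℤ, U (e n) = e (n + 1))
    (hR : ∀ n : ℤ, R (e n) = ((ρ n.natAbs : ℝ) : ℂ) • e n)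
    (T : H2 →L[ℂ] H2)
    (hT : ∀ x : Hl × Hl, T (pair x) = pair (U x.1 + R x.2, U x.2))
    (l : ℂ) (hl : ‖l‖ < 1) (j : ℤ) (x : H2) :
    (inner ℂ ((T - l • ContinuousLinearMap.id ℂ H2) x) (pair (w1 l j, w2 ρ l j)) : ℂ)
      = inner ℂ x (pair (e j, (0 : Hl))) := by
  set x₁ := ((WithLp.equiv 2 (Hl × Hl)) x).1 with hx₁
  set x₂ := ((WithLp.equiv 2 (Hl × Hl)) x).2 with hx₂
  have hx : x = pair (x₁, x₂) := by
    rw [hx₁, hx₂, pair]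
    exact ((WithLp.equiv 2 (Hl × Hl)).symm_apply_apply x).symm
  have hTx : (T - l • ContinuousLinearMap.id ℂ H2) x
      = pair (U x₁ + R x₂ - l • x₁, U x₂ - l • x₂) := by
    rw [hx]
    simp only [ContinuousLinearMap.sub_apply, ContinuousLinearMap.smul_apply,
      ContinuousLinearMap.id_apply, hT]
    rfl
  rw [hTx, hx]
  simp only [pair, WithLp.prod_inner_apply, WithLp.equiv_symm_apply, WithLp.ofLp_toLp]
  rw [inner_zero_right, add_zero]
  set cl := conj l with hcl
  have hcln : ‖cl‖ < 1 := by simpa [hcl] using hl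
  -- abbreviations for coefficient sequences
  set g : ℕ → ℂ := fun k => cl^k * conj (x₁ (j + (k:ℤ))) with hg
  set φ : ℕ → ℂ := fun k => cl^k * ((ρ (j+1+(k:ℤ)).natAbs : ℝ) : ℂ) * conj (x₂ (j+1+(k:ℤ))) with hφ
  set h : ℕ → ℂ := fun k => cl^k * ((sig ρ j k : ℝ) : ℂ) * conj (x₂ (j+1+(k:ℤ))) with hh
  have hclk : ∀ k : ℕ, ‖cl ^ k‖ = ‖l‖ ^ k := by
    intro k
    rw [norm_pow, hcl, RCLike.norm_conj]
  have hgs : Summable g := by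
    apply summable_geom_poly l hl _ ‖x₁‖
    intro k
    rw [hg]
    have h4 : (0:ℝ) ≤ ‖l‖^k := by positivity
    calc ‖cl ^ k * conj (x₁ (j + (k:ℤ)))‖ = ‖l‖^k * ‖x₁ (j + (k:ℤ))‖ := by
          rw [norm_mul, hclk, RCLike.norm_conj]
    _ ≤ ‖x₁‖ * ((k:ℝ)+1)^2 * ‖l‖^k := by
          have := coord_bound x₁ (j + (k:ℤ))
          have hk : (1:ℝ) ≤ ((k:ℝ)+1)^2 := by nlinarith [(Nat.cast_nonneg k : (0:ℝ) ≤ k)]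
          nlinarith [norm_nonneg x₁, mul_nonneg h4 (norm_nonneg x₁),
            mul_nonneg (mul_nonneg (norm_nonneg x₁) (by positivity : (0:ℝ) ≤ ((k:ℝ)+1)^2)) h4]
  have hφs : Summable φ := by
    apply summable_geom_poly l hl _ (ρ 0 * ‖x₂‖)
    intro k
    rw [hφ]
    have h4 : (0:ℝ) ≤ ‖l‖^k := by positivity
    calc ‖cl ^ k * ((ρ (j+1+(k:ℤ)).natAbs : ℝ) : ℂ) * conj (x₂ (j+1+(k:ℤ)))‖
        = ‖l‖^k * ρ (j+1+(k:ℤ)).natAbs * ‖x₂ (j+1+(k:ℤ))‖ := by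
          rw [norm_mul, norm_mul, hclk, RCLike.norm_conj, Complex.norm_real, Real.norm_eq_abs,
            abs_of_nonneg (hpos _).le]
    _ ≤ ρ 0 * ‖x₂‖ * (↑k+1) * ‖l‖^k :=
          mul_bound _ _ _ _ _ h4 (hpos _).le (norm_nonneg _)
            (hmono (Nat.zero_le _)) (coord_bound x₂ (j + 1 + (k:ℤ))) k
    _ ≤ ρ 0 * ‖x₂‖ * ((k:ℝ)+1)^2 * ‖l‖^k := by
          have hk : ((k:ℝ)+1) ≤ ((k:ℝ)+1)^2 := by nlinarith [(Nat.cast_nonneg k : (0:ℝ) ≤ k)]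
          have hM : (0:ℝ) ≤ ρ 0 * ‖x₂‖ := mul_nonneg (hpos 0).le (norm_nonneg _)
          nlinarith [mul_nonneg hM h4, mul_nonneg (mul_nonneg hM h4) (by positivity : (0:ℝ) ≤ (k:ℝ)+1)]
  have hhs : Summable h := by
    apply summable_geom_poly l hl _ (ρ 0 * ‖x₂‖)
    intro k
    rw [hh]
    have h4 : (0:ℝ) ≤ ‖l‖^k := by positivity
    have h5 : (0:ℝ) ≤ sig ρ j k := sig_nonneg ρ hpos j k
    calc ‖cl ^ k * ((sig ρ j k : ℝ) : ℂ) * conj (x₂ (j+1+(k:ℤ)))‖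
        = ‖l‖^k * sig ρ j k * ‖x₂ (j+1+(k:ℤ))‖ := by
          rw [norm_mul, norm_mul, hclk, RCLike.norm_conj, Complex.norm_real, Real.norm_eq_abs,
            abs_of_nonneg h5]
    _ ≤ (((k:ℝ)+1) * ρ 0) * ‖x₂‖ * (↑k+1) * ‖l‖^k :=
          mul_bound _ _ _ _ _ h4 h5 (norm_nonneg _)
            (by have := sig_le ρ hpos hmono j k; linarith)
            (coord_bound x₂ (j + 1 + (k:ℤ))) k
    _ = ρ 0 * ‖x₂‖ * ((k:ℝ)+1)^2 * ‖l‖^k := by ring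
  set s5 : ℕ → ℂ := fun k => cl^(k+1) * ((sig ρ j k : ℝ) : ℂ) * conj (x₂ (j+2+(k:ℤ))) with hs5
  have hssucc : ∀ (f : ℕ → ℂ), Summable f → Summable (fun k => f (k+1)) := by
    intro f hf
    exact (summable_nat_add_iff 1).mpr hf
  have hsplit : ∀ k : ℕ, h (k+1) = s5 k + φ (k+1) := by
    intro k
    rw [hh, hs5, hφ]
    simp only []
    have hi1 : j + 1 + ((k:ℤ)+1) = j + 2 + (k:ℤ) := by ring
    push_cast
    rw [hi1, sig_succ]
    have hi2 : (j + 2 + (k:ℤ)).natAbs = (j + 1 + ((k:ℤ)+1)).natAbs := by omega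
    push_cast
    rw [hi2, hi1]
    ring
  have hs5s : Summable s5 := by
    have h1 := (hssucc h hhs).sub (hssucc φ hφs)
    apply h1.congr
    intro k
    rw [hsplit k]
    ring
  have hh0 : h 0 = φ 0 := by
    rw [hh, hφ]
    simp only []
    congr 2
    rw [sig]
    simp
  have keyg : (∑' k, g k) = g 0 + ∑' k, g (k+1) := Summable.tsum_eq_zero_add hgs
  have keyh : (∑' k, h k) = h 0 + ∑' k, h (k+1) := Summable.tsum_eq_zero_add hhs
  have keyφ : (∑' k, φ k) = φ 0 + ∑' k, φ (k+1) := Summable.tsum_eq_zero_add hφs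
  have keyh2 : (∑' k, h (k+1)) = (∑' k, s5 k) + ∑' k, φ (k+1) := by
    rw [← Summable.tsum_add hs5s (hssucc φ hφs)]
    exact tsum_congr hsplit
  -- identify the five inner ℂ products
  have hA : (inner ℂ (U x₁) (w1 l j) : ℂ) = ∑' k, g k := by
    rw [inner_w1 _ l hl j]
    apply tsum_congr
    intro k
    rw [U_coord U hU]
    have : j + 1 + (k:ℤ) - 1 = j + (k:ℤ) := by ring
    rw [this, hg, hcl]
  have hB : (inner ℂ (R x₂) (w1 l j) : ℂ) = ∑' k, φ k := by
    rw [inner_w1 _ l hl j]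
    apply tsum_congr
    intro k
    rw [R_coord ρ R hR, hφ, hcl]
    simp only [map_mul, Complex.conj_ofReal]
    ring
  have hC : (conj l) * (inner ℂ x₁ (w1 l j) : ℂ) = ∑' k, g (k+1) := by
    rw [inner_w1 _ l hl j, ← tsum_mul_left]
    apply tsum_congr
    intro k
    rw [hg, hcl]
    push_cast
    have : j + ((k:ℤ)+1) = j + 1 + (k:ℤ) := by ring
    rw [this]
    ring
  have hD : (inner ℂ (U x₂) (w2 ρ l j) : ℂ) = ∑' k, (-(h k)) := by
    rw [inner_w2 ρ hpos hmono _ l hl j]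
    apply tsum_congr
    intro k
    rw [U_coord U hU]
    have : j + 2 + (k:ℤ) - 1 = j + 1 + (k:ℤ) := by ring
    rw [this, hh, hcl]
    ring
  have hE : (conj l) * (inner ℂ x₂ (w2 ρ l j) : ℂ) = ∑' k, (-(s5 k)) := by
    rw [inner_w2 ρ hpos hmono _ l hl j, ← tsum_mul_left]
    apply tsum_congr
    intro k
    rw [hs5, hcl]
    ring
  have hL1 : (inner ℂ (U x₁ + R x₂ - l • x₁) (w1 l j) : ℂ)
      = (∑' k, g k) + (∑' k, φ k) - ∑' k, g (k+1) := by
    rw [inner_sub_left, inner_add_left, inner_smul_left, hA, hB, ← hC]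
  have hL2 : (inner ℂ (U x₂ - l • x₂) (w2 ρ l j) : ℂ)
      = (∑' k, (-(h k))) - ∑' k, (-(s5 k)) := by
    rw [inner_sub_left, inner_smul_left, hD, ← hE]
  have hneg1 : (∑' k, (-(h k))) = -∑' k, h k := tsum_neg
  have hneg2 : (∑' k, (-(s5 k))) = -∑' k, s5 k := tsum_neg
  have hRHS : (inner ℂ x₁ (e j) : ℂ) = g 0 := by
    rw [inner_e_right, hg]
    simp
  rw [hL1, hL2, hneg1, hneg2, hRHS]
  linear_combination keyg + keyφ - keyh - keyh2 - hh0

open ComplexConjugate in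
def Cc (ρ : ℕ → ℝ) (u : H2) (j : ℤ) (k : ℕ) : ℂ :=
  conj (((WithLp.equiv 2 (Hl × Hl)) u).1 (j+1+(k:ℤ)))
    - ((sig ρ j k : ℝ) : ℂ) * conj (((WithLp.equiv 2 (Hl × Hl)) u).2 (j+2+(k:ℤ)))

lemma summable_poly_geom (r : ℝ) (hr0 : 0 ≤ r) (hr : r < 1) (M : ℝ) :
    Summable (fun k : ℕ => M * ((k:ℝ)+1)^2 * r^k) := by
  have hrn : ‖r‖ < 1 := by rwa [Real.norm_eq_abs, abs_of_nonneg hr0]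
  have h1 : Summable (fun k : ℕ => (k:ℝ)^2 * r^k) :=
    summable_pow_mul_geometric_of_norm_lt_one 2 hrn
  have h1' : Summable (fun k : ℕ => (k:ℝ)^1 * r^k) :=
    summable_pow_mul_geometric_of_norm_lt_one 1 hrn
  have h2 : Summable (fun k : ℕ => r^k) := summable_geometric_of_lt_one hr0 hr
  have := ((h1.add (h1'.mul_left 2)).add h2).mul_left M
  apply this.congr
  intro k
  ring

lemma Cc_bound (ρ : ℕ → ℝ) (hpos : ∀ n, 0 < ρ n) (hmono : Antitone ρ) (u : H2) (j : ℤ) (k : ℕ) :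
    ‖Cc ρ u j k‖ ≤ (‖((WithLp.equiv 2 (Hl × Hl)) u).1‖ + ρ 0 * ‖((WithLp.equiv 2 (Hl × Hl)) u).2‖)
      * ((k:ℝ)+1)^2 := by
  set u₁ := ((WithLp.equiv 2 (Hl × Hl)) u).1
  set u₂ := ((WithLp.equiv 2 (Hl × Hl)) u).2
  have h1 : ‖Cc ρ u j k‖ ≤ ‖u₁ (j+1+(k:ℤ))‖ + sig ρ j k * ‖u₂ (j+2+(k:ℤ))‖ := by
    refine (norm_sub_le _ _).trans ?_
    rw [RCLike.norm_conj, norm_mul, RCLike.norm_conj, Complex.norm_real, Real.norm_eq_abs,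
      abs_of_nonneg (sig_nonneg ρ hpos j k)]
  have h2 := coord_bound u₁ (j+1+(k:ℤ))
  have h3 := coord_bound u₂ (j+2+(k:ℤ))
  have h4 := sig_le ρ hpos hmono j k
  have h5 := sig_nonneg ρ hpos j k
  have hk1 : (1:ℝ) ≤ ((k:ℝ)+1) := by
    have : (0:ℝ) ≤ (k:ℝ) := Nat.cast_nonneg k
    linarith
  have hk2 : ((k:ℝ)+1) ≤ ((k:ℝ)+1)^2 := by nlinarith
  have hm : sig ρ j k * ‖u₂ (j+2+(k:ℤ))‖ ≤ ((k:ℝ)+1) * ρ 0 * ‖u₂‖ := by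
    have hnn : (0:ℝ) ≤ ((k:ℝ)+1) * ρ 0 := mul_nonneg (by linarith) (hpos 0).le
    have := mul_le_mul h4 h3 (norm_nonneg _) hnn
    linarith
  have hn1 : (0:ℝ) ≤ ‖u₁‖ := norm_nonneg _
  have hn2 : (0:ℝ) ≤ ρ 0 * ‖u₂‖ := mul_nonneg (hpos 0).le (norm_nonneg _)
  have e1 : ‖u₁‖ ≤ ‖u₁‖ * ((k:ℝ)+1)^2 := by nlinarith
  have e2 : ((k:ℝ)+1) * ρ 0 * ‖u₂‖ ≤ ρ 0 * ‖u₂‖ * ((k:ℝ)+1)^2 := by nlinarith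
  nlinarith

lemma summable_rCc (ρ : ℕ → ℝ) (hpos : ∀ n, 0 < ρ n) (hmono : Antitone ρ) (u : H2) (j : ℤ)
    (r : ℝ) (hr0 : 0 ≤ r) (hr : r < 1) :
    Summable (fun k : ℕ => r^k * ‖Cc ρ u j k‖) := by
  refine Summable.of_nonneg_of_le (fun k => by positivity) (fun k => ?_)
    (summable_poly_geom r hr0 hr (‖((WithLp.equiv 2 (Hl × Hl)) u).1‖
      + ρ 0 * ‖((WithLp.equiv 2 (Hl × Hl)) u).2‖))
  have h1 := Cc_bound ρ hpos hmono u j k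
  have h2 : (0:ℝ) ≤ r^k := by positivity
  calc r^k * ‖Cc ρ u j k‖ ≤ r^k * ((‖((WithLp.equiv 2 (Hl × Hl)) u).1‖
      + ρ 0 * ‖((WithLp.equiv 2 (Hl × Hl)) u).2‖) * ((k:ℝ)+1)^2) :=
        mul_le_mul_of_nonneg_left h1 h2
  _ = _ := by ring

lemma summable_sig (ρ : ℕ → ℝ) (hpos : ∀ n, 0 < ρ n) (hmono : Antitone ρ) (j : ℤ)
    (r : ℝ) (hr0 : 0 ≤ r) (hr : r < 1) :
    Summable (fun k : ℕ => r^k * sig ρ j k) := by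
  refine Summable.of_nonneg_of_le
    (fun k => mul_nonneg (by positivity) (sig_nonneg ρ hpos j k)) (fun k => ?_)
    (summable_poly_geom r hr0 hr (ρ 0))
  have h4 := sig_le ρ hpos hmono j k
  have h6 : (0:ℝ) ≤ r^k := by positivity
  have hk2 : ((k:ℝ)+1) ≤ ((k:ℝ)+1)^2 := by nlinarith [(Nat.cast_nonneg k : (0:ℝ) ≤ k)]
  calc r^k * sig ρ j k ≤ r^k * (((k:ℝ)+1) * ρ 0) := mul_le_mul_of_nonneg_left h4 h6
  _ ≤ ρ 0 * ((k:ℝ)+1)^2 * r^k := by nlinarith [mul_nonneg h6 (mul_nonneg (by positivity : (0:ℝ) ≤ ((k:ℝ)+1)) (hpos 0).le), mul_nonneg h6 (hpos 0).le, (hpos 0).le]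

set_option maxHeartbeats 1000000 in
open ComplexConjugate in
lemma inner_res (ρ : ℕ → ℝ) (hpos : ∀ n, 0 < ρ n) (hmono : Antitone ρ)
    (U R : Hl →L[ℂ] Hl)
    (hU : ∀ n : ℤ, U (e n) = e (n + 1))
    (hR : ∀ n : ℤ, R (e n) = ((ρ n.natAbs : ℝ) : ℂ) • e n)
    (T : H2 →L[ℂ] H2)
    (hT : ∀ x : Hl × Hl, T (pair x) = pair (U x.1 + R x.2, U x.2))
    (Res : ℂ → H2 →L[ℂ] H2)
    (hRes : ∀ lam : ℂ, ‖lam‖ < 1 →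
      (Res lam).comp (T - lam • ContinuousLinearMap.id ℂ H2) = ContinuousLinearMap.id ℂ H2 ∧
      (T - lam • ContinuousLinearMap.id ℂ H2).comp (Res lam) = ContinuousLinearMap.id ℂ H2)
    (u : H2) (l : ℂ) (hl : ‖l‖ < 1) (j : ℤ) :
    (inner ℂ (Res l u) (pair (e j, (0:Hl))) : ℂ) = ∑' k : ℕ, (conj l)^k * Cc ρ u j k := by
  have hk := key_identity ρ hpos hmono U R hU hR T hT l hl j (Res l u)
  have h2 : (T - l • ContinuousLinearMap.id ℂ H2) (Res l u) = u := by
    have := DFunLike.congr_fun (hRes l hl).2 u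
    simpa using this
  rw [h2] at hk
  rw [← hk]
  set u₁ := ((WithLp.equiv 2 (Hl × Hl)) u).1 with hu₁
  set u₂ := ((WithLp.equiv 2 (Hl × Hl)) u).2 with hu₂
  have hu : u = pair (u₁, u₂) := by
    rw [hu₁, hu₂, pair]
    exact ((WithLp.equiv 2 (Hl × Hl)).symm_apply_apply u).symm
  conv_lhs => rw [hu]
  simp only [pair, WithLp.prod_inner_apply, WithLp.equiv_symm_apply, WithLp.ofLp_toLp]
  rw [inner_w1 u₁ l hl j, inner_w2 ρ hpos hmono u₂ l hl j]
  have hs1 : Summable (fun k : ℕ => (conj l)^k * conj (u₁ (j+1+(k:ℤ)))) := by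
    apply Summable.of_norm
    refine Summable.of_nonneg_of_le (fun k => norm_nonneg _) (fun k => ?_)
      ((summable_geometric_of_lt_one (norm_nonneg l) hl).mul_right ‖u₁‖)
    rw [norm_mul, norm_pow, RCLike.norm_conj, RCLike.norm_conj]
    exact mul_le_mul_of_nonneg_left (coord_bound u₁ _) (by positivity)
  have hs2 : Summable (fun k : ℕ => (-((conj l)^k * ((sig ρ j k : ℝ) : ℂ))) * conj (u₂ (j+2+(k:ℤ)))) := by
    apply Summable.of_norm
    have hb := summable_sig ρ hpos hmono j ‖l‖ (norm_nonneg l) hl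
    refine Summable.of_nonneg_of_le (fun k => norm_nonneg _) (fun k => ?_) (hb.mul_right ‖u₂‖)
    rw [norm_mul, norm_neg, norm_mul, norm_pow, RCLike.norm_conj, RCLike.norm_conj,
      Complex.norm_real, Real.norm_eq_abs, abs_of_nonneg (sig_nonneg ρ hpos j k)]
    have h3 := coord_bound u₂ (j+2+(k:ℤ))
    have h5 := sig_nonneg ρ hpos j k
    have h6 : (0:ℝ) ≤ ‖l‖^k := by positivity
    calc ‖l‖^k * sig ρ j k * ‖u₂ (j+2+(k:ℤ))‖ ≤ ‖l‖^k * sig ρ j k * ‖u₂‖ :=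
          mul_le_mul_of_nonneg_left h3 (mul_nonneg h6 h5)
    _ = _ := rfl
  rw [← Summable.tsum_add hs1 hs2]
  apply tsum_congr
  intro k
  rw [Cc]
  ring

open ComplexConjugate MeasureTheory Real in
set_option maxHeartbeats 2000000 in
lemma coef_r_bound (ρ : ℕ → ℝ) (hpos : ∀ n, 0 < ρ n) (hmono : Antitone ρ)
    (u : H2) (j : ℤ) (k0 : ℕ) (r : ℝ) (hr0 : 0 ≤ r) (hr : r < 1) (C : ℝ) (hC : 0 ≤ C)
    (F : ℝ → ℂ) (hFdef : F = fun θ : ℝ => ∑' k : ℕ,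
      (conj ((r:ℂ) * Complex.exp ((θ:ℂ) * Complex.I)))^k * Cc ρ u j k)
    (hbb : (∫⁻ θ in Set.Ioc (0 : ℝ) (2 * Real.pi),
        ENNReal.ofReal (‖F θ‖ ^ 2)) ≤ ENNReal.ofReal C) :
    2 * Real.pi * (r^k0 * ‖Cc ρ u j k0‖) ≤ (C + 2 * Real.pi) / 2 := by
  have hπ : (0:ℝ) < Real.pi := Real.pi_pos
  -- basic facts about the terms
  have hconj : ∀ θ : ℝ, conj ((r:ℂ) * Complex.exp ((θ:ℂ) * Complex.I))
      = (r:ℂ) * Complex.exp (-(θ:ℂ) * Complex.I) := by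
    intro θ
    rw [map_mul, Complex.conj_ofReal, ← Complex.exp_conj]
    congr 2
    simp [Complex.conj_ofReal]
  have hpow : ∀ (θ : ℝ) (k : ℕ), (conj ((r:ℂ) * Complex.exp ((θ:ℂ) * Complex.I)))^k
      = (r:ℂ)^k * Complex.exp (-(k:ℂ) * (θ:ℂ) * Complex.I) := by
    intro θ k
    rw [hconj, mul_pow, ← Complex.exp_nat_mul]
    congr 1
    ring
  have hnormexp : ∀ z : ℝ, ‖Complex.exp ((z:ℂ) * Complex.I)‖ = 1 := by
    intro z
    rw [Complex.norm_exp]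
    simp
  have hterm_norm : ∀ (θ : ℝ) (k : ℕ),
      ‖(conj ((r:ℂ) * Complex.exp ((θ:ℂ) * Complex.I)))^k * Cc ρ u j k‖
        = r^k * ‖Cc ρ u j k‖ := by
    intro θ k
    rw [hpow, norm_mul, norm_mul, norm_pow, Complex.norm_real, Real.norm_eq_abs,
      abs_of_nonneg hr0]
    have : (-(k:ℂ) * (θ:ℂ) * Complex.I) = ((-(k * θ) : ℝ) : ℂ) * Complex.I := by
      push_cast; ring
    rw [this, hnormexp, mul_one]
  have hsum_r := summable_rCc ρ hpos hmono u j r hr0 hr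
  -- continuity of F
  have hFcont : Continuous F := by
    rw [hFdef]
    apply continuous_tsum (u := fun k => r^k * ‖Cc ρ u j k‖)
    · intro k
      refine Continuous.congr (f := fun θ : ℝ =>
        (r:ℂ)^k * Complex.exp (-(k:ℂ) * (θ:ℂ) * Complex.I) * Cc ρ u j k)
        (by fun_prop) (fun θ => by rw [hpow])
    · exact hsum_r
    · intro k θ
      exact le_of_eq (hterm_norm θ k)
  have hFnormsq_cont : Continuous fun θ => ‖F θ‖^2 := by fun_prop
  -- the integral identity
  set G : ℕ → ℝ → ℂ := fun k θ =>
    ((conj ((r:ℂ) * Complex.exp ((θ:ℂ) * Complex.I)))^k * Cc ρ u j k)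
      * Complex.exp ((k0:ℂ) * (θ:ℂ) * Complex.I) with hG
  have hGnorm : ∀ (k : ℕ) (θ : ℝ), ‖G k θ‖ = r^k * ‖Cc ρ u j k‖ := by
    intro k θ
    rw [hG]
    simp only []
    rw [norm_mul]
    have : ((k0:ℂ) * (θ:ℂ) * Complex.I) = (((k0 * θ) : ℝ) : ℂ) * Complex.I := by
      push_cast; ring
    rw [this, hnormexp, mul_one, hterm_norm]
  have hmeasG : ∀ k : ℕ, AEStronglyMeasurable (G k)
      (volume.restrict (Set.Ioc (0:ℝ) (2*Real.pi))) := by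
    intro k
    apply Continuous.aestronglyMeasurable
    refine Continuous.congr (f := fun θ : ℝ =>
      (r:ℂ)^k * Complex.exp (-(k:ℂ) * (θ:ℂ) * Complex.I) * Cc ρ u j k
        * Complex.exp ((k0:ℂ) * (θ:ℂ) * Complex.I)) (by fun_prop) (fun θ => by rw [hG]; simp only []; rw [hpow])
  have hμIoc : volume (Set.Ioc (0:ℝ) (2*Real.pi)) = ENNReal.ofReal (2*Real.pi) := by
    rw [Real.volume_Ioc, sub_zero]
  have hlintG : ∑' k : ℕ, ∫⁻ θ in Set.Ioc (0:ℝ) (2*Real.pi), ‖G k θ‖₊ ≠ ⊤ := by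
    have heq : ∀ k : ℕ, (∫⁻ θ in Set.Ioc (0:ℝ) (2*Real.pi), (‖G k θ‖₊ : ℝ≥0∞))
        = ENNReal.ofReal (r^k * ‖Cc ρ u j k‖ * (2*Real.pi)) := by
      intro k
      have h1 : ∀ θ : ℝ, (‖G k θ‖₊ : ℝ≥0∞) = ENNReal.ofReal (r^k * ‖Cc ρ u j k‖) := by
        intro θ
        rw [← hGnorm k θ, ← Real.enorm_eq_ofReal (norm_nonneg _), enorm_norm]; rfl
      calc (∫⁻ θ in Set.Ioc (0:ℝ) (2*Real.pi), (‖G k θ‖₊ : ℝ≥0∞))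
          = ∫⁻ _ in Set.Ioc (0:ℝ) (2*Real.pi), ENNReal.ofReal (r^k * ‖Cc ρ u j k‖) :=
            lintegral_congr h1
      _ = ENNReal.ofReal (r^k * ‖Cc ρ u j k‖) * volume (Set.Ioc (0:ℝ) (2*Real.pi)) := by
            rw [setLIntegral_const]
      _ = ENNReal.ofReal (r^k * ‖Cc ρ u j k‖ * (2*Real.pi)) := by
            rw [hμIoc, ← ENNReal.ofReal_mul (by positivity)]
    rw [tsum_congr heq, ← ENNReal.ofReal_tsum_of_nonneg (fun k => by positivity)
      (hsum_r.mul_right _)]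
    exact ENNReal.ofReal_ne_top
  have hswap := integral_tsum (μ := volume.restrict (Set.Ioc (0:ℝ) (2*Real.pi))) hmeasG hlintG
  -- individual integrals
  have hint : ∀ k : ℕ, (∫ θ in Set.Ioc (0:ℝ) (2*Real.pi), G k θ)
      = if k = k0 then ((2*Real.pi : ℝ) : ℂ) * (r:ℂ)^k0 * Cc ρ u j k0 else 0 := by
    intro k
    have hIoc : (∫ θ in Set.Ioc (0:ℝ) (2*Real.pi), G k θ)
        = ∫ θ in (0:ℝ)..(2*Real.pi), G k θ := by
      rw [intervalIntegral.integral_of_le (by positivity)]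
    have hGform : ∀ θ : ℝ, G k θ = ((r:ℂ)^k * Cc ρ u j k)
        * Complex.exp ((((k0:ℂ) - (k:ℂ)) * Complex.I) * (θ:ℂ)) := by
      intro θ
      rw [hG]
      simp only []
      rw [hpow]
      have h1 : ((r:ℂ)^k * Complex.exp (-(k:ℂ) * (θ:ℂ) * Complex.I) * Cc ρ u j k)
          * Complex.exp ((k0:ℂ) * (θ:ℂ) * Complex.I)
          = ((r:ℂ)^k * Cc ρ u j k) * (Complex.exp (-(k:ℂ) * (θ:ℂ) * Complex.I)
            * Complex.exp ((k0:ℂ) * (θ:ℂ) * Complex.I)) := by ring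
      rw [h1, ← Complex.exp_add]
      congr 2
      ring
    by_cases hk : k = k0
    · subst hk
      rw [hIoc]
      have : ∀ θ : ℝ, G k θ = ((r:ℂ)^k * Cc ρ u j k) := by
        intro θ
        rw [hGform θ]
        simp
      rw [intervalIntegral.integral_congr (fun θ _ => this θ)]
      rw [intervalIntegral.integral_const]
      simp only [if_pos rfl]
      rw [sub_zero, Complex.real_smul]
      push_cast
      ring
    · rw [hIoc]
      rw [intervalIntegral.integral_congr (g := fun θ : ℝ => ((r:ℂ)^k * Cc ρ u j k)
        * Complex.exp ((((k0:ℂ) - (k:ℂ)) * Complex.I) * (θ:ℂ))) (fun θ _ => hGform θ)]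
      have hc : (((k0:ℂ) - (k:ℂ)) * Complex.I) ≠ 0 := by
        simp only [ne_eq, mul_eq_zero, Complex.I_ne_zero, or_false, sub_eq_zero]
        exact_mod_cast fun h => hk (by exact_mod_cast h.symm)
      rw [intervalIntegral.integral_const_mul, integral_exp_mul_complex hc]
      rw [if_neg hk]
      have h2pi : Complex.exp ((((k0:ℂ) - (k:ℂ)) * Complex.I) * ((2*Real.pi : ℝ):ℂ)) = 1 := by
        have : ((((k0:ℂ) - (k:ℂ)) * Complex.I) * ((2*Real.pi : ℝ):ℂ))
            = (((k0:ℤ) - (k:ℤ) : ℤ) : ℂ) * (2 * (Real.pi:ℂ) * Complex.I) := by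
          push_cast; ring
        rw [this, Complex.exp_int_mul_two_pi_mul_I]
      rw [h2pi]
      simp
  -- combine
  have htsum_int : (∑' k : ℕ, ∫ θ in Set.Ioc (0:ℝ) (2*Real.pi), G k θ)
      = ((2*Real.pi : ℝ) : ℂ) * (r:ℂ)^k0 * Cc ρ u j k0 := by
    rw [tsum_congr hint, tsum_eq_single k0 (fun k hk => by rw [if_neg hk])]
    rw [if_pos rfl]
  have hFG : ∀ θ : ℝ, (∑' k : ℕ, G k θ) = F θ * Complex.exp ((k0:ℂ) * (θ:ℂ) * Complex.I) := by
    intro θ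
    rw [hFdef]
    simp only [hG]
    rw [tsum_mul_right]
  have hkey : ((2*Real.pi : ℝ) : ℂ) * (r:ℂ)^k0 * Cc ρ u j k0
      = ∫ θ in Set.Ioc (0:ℝ) (2*Real.pi), F θ * Complex.exp ((k0:ℂ) * (θ:ℂ) * Complex.I) := by
    rw [← htsum_int, ← hswap]
    exact integral_congr_ae (μ := volume.restrict (Set.Ioc (0:ℝ) (2*Real.pi)))
      (Filter.Eventually.of_forall (fun θ => hFG θ))
  -- integrability of ‖F‖²
  have hFsm : AEStronglyMeasurable (fun θ => ‖F θ‖^2)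
      (volume.restrict (Set.Ioc (0:ℝ) (2*Real.pi))) :=
    hFnormsq_cont.aestronglyMeasurable
  have hintF2 : Integrable (fun θ => ‖F θ‖^2) (volume.restrict (Set.Ioc (0:ℝ) (2*Real.pi))) := by
    refine ⟨hFsm, ?_⟩
    rw [HasFiniteIntegral]
    have : ∀ θ : ℝ, (‖(‖F θ‖^2)‖₊ : ℝ≥0∞) = ENNReal.ofReal (‖F θ‖^2) := by
      intro θ
      rw [← Real.enorm_eq_ofReal (by positivity)]; rfl
    calc ∫⁻ θ in Set.Ioc (0:ℝ) (2*Real.pi), (‖(‖F θ‖^2)‖₊ : ℝ≥0∞)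
        = ∫⁻ θ in Set.Ioc (0:ℝ) (2*Real.pi), ENNReal.ofReal (‖F θ‖^2) := lintegral_congr this
    _ ≤ ENNReal.ofReal C := hbb
    _ < ⊤ := ENNReal.ofReal_lt_top
  have hintF2val : (∫ θ in Set.Ioc (0:ℝ) (2*Real.pi), ‖F θ‖^2) ≤ C := by
    rw [integral_eq_lintegral_of_nonneg_ae (Filter.Eventually.of_forall (fun θ => by positivity))
      hFsm]
    calc (∫⁻ θ in Set.Ioc (0:ℝ) (2*Real.pi), ENNReal.ofReal (‖F θ‖^2)).toReal
        ≤ (ENNReal.ofReal C).toReal := ENNReal.toReal_mono ENNReal.ofReal_ne_top hbb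
    _ = C := ENNReal.toReal_ofReal hC
  -- bound on ∫ ‖F‖
  have hintF : (∫ θ in Set.Ioc (0:ℝ) (2*Real.pi), ‖F θ‖) ≤ (C + 2*Real.pi) / 2 := by
    have hrhs_int : Integrable (fun θ => (‖F θ‖^2 + 1) / 2)
        (volume.restrict (Set.Ioc (0:ℝ) (2*Real.pi))) := by
      apply Integrable.div_const
      exact hintF2.add (integrable_const 1)
    have h1 : (∫ θ in Set.Ioc (0:ℝ) (2*Real.pi), ‖F θ‖)
        ≤ ∫ θ in Set.Ioc (0:ℝ) (2*Real.pi), (‖F θ‖^2 + 1) / 2 := by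
      apply integral_mono_of_nonneg (Filter.Eventually.of_forall (fun θ => norm_nonneg _))
        hrhs_int (Filter.Eventually.of_forall (fun θ => ?_))
      have := sq_nonneg (‖F θ‖ - 1)
      simp only []
      nlinarith
    have h2 : (∫ θ in Set.Ioc (0:ℝ) (2*Real.pi), (‖F θ‖^2 + 1) / 2)
        = ((∫ θ in Set.Ioc (0:ℝ) (2*Real.pi), ‖F θ‖^2)
          + (volume (Set.Ioc (0:ℝ) (2*Real.pi))).toReal) / 2 := by
      rw [integral_div, integral_add hintF2 (integrable_const 1)]
      simp [hμIoc, hπ.le]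
    rw [h2] at h1
    have h3 : (volume (Set.Ioc (0:ℝ) (2*Real.pi))).toReal = 2*Real.pi := by
      rw [hμIoc, ENNReal.toReal_ofReal (by positivity)]
    rw [h3] at h1
    linarith
  -- final assembly
  have hnorm_eq : ‖((2*Real.pi : ℝ) : ℂ) * (r:ℂ)^k0 * Cc ρ u j k0‖
      = 2*Real.pi * (r^k0 * ‖Cc ρ u j k0‖) := by
    rw [norm_mul, norm_mul, norm_pow, Complex.norm_real, Complex.norm_real,
      Real.norm_eq_abs, Real.norm_eq_abs, abs_of_nonneg (by positivity : (0:ℝ) ≤ 2*Real.pi),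
      abs_of_nonneg hr0, mul_assoc]
  have hnormint : ‖∫ θ in Set.Ioc (0:ℝ) (2*Real.pi),
      F θ * Complex.exp ((k0:ℂ) * (θ:ℂ) * Complex.I)‖
        ≤ ∫ θ in Set.Ioc (0:ℝ) (2*Real.pi), ‖F θ‖ := by
    refine (norm_integral_le_integral_norm _).trans (le_of_eq ?_)
    refine integral_congr_ae (μ := volume.restrict (Set.Ioc (0:ℝ) (2*Real.pi)))
      (Filter.Eventually.of_forall (fun θ => ?_))
    show ‖F θ * Complex.exp ((k0:ℂ) * (θ:ℂ) * Complex.I)‖ = ‖F θ‖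
    rw [norm_mul]
    have : ((k0:ℂ) * (θ:ℂ) * Complex.I) = (((k0 * θ) : ℝ) : ℂ) * Complex.I := by
      push_cast; ring
    rw [this, hnormexp, mul_one]
  calc 2*Real.pi * (r^k0 * ‖Cc ρ u j k0‖) = ‖((2*Real.pi : ℝ) : ℂ) * (r:ℂ)^k0 * Cc ρ u j k0‖ :=
        hnorm_eq.symm
  _ = ‖∫ θ in Set.Ioc (0:ℝ) (2*Real.pi), F θ * Complex.exp ((k0:ℂ) * (θ:ℂ) * Complex.I)‖ := by
        rw [hkey]
  _ ≤ ∫ θ in Set.Ioc (0:ℝ) (2*Real.pi), ‖F θ‖ := hnormint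
  _ ≤ (C + 2*Real.pi) / 2 := hintF

lemma le_of_forall_pow_mul (a B : ℝ) (k : ℕ)
    (h : ∀ r : ℝ, 0 ≤ r → r < 1 → r^k * a ≤ B) : a ≤ B := by
  have hseq : Filter.Tendsto (fun n : ℕ => (1 - 1/((n:ℝ)+1))^k * a) Filter.atTop
      (nhds a) := by
    have h1 : Filter.Tendsto (fun n : ℕ => 1 - 1/((n:ℝ)+1)) Filter.atTop (nhds 1) := by
      have := tendsto_one_div_add_atTop_nhds_zero_nat (𝕜 := ℝ)
      have h2 := Filter.Tendsto.sub (tendsto_const_nhds (x := (1:ℝ))) this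
      simpa using h2
    have h3 := (h1.pow k).mul_const a
    simpa using h3
  refine le_of_tendsto hseq (Filter.Eventually.of_forall (fun n => ?_))
  apply h
  · have h4 : 1/((n:ℝ)+1) ≤ 1 := by
      rw [div_le_one (by positivity)]
      have : (0:ℝ) ≤ (n:ℝ) := Nat.cast_nonneg n
      linarith
    linarith
  · have h5 : 0 < 1/((n:ℝ)+1) := by positivity
    linarith


set_option maxHeartbeats 2000000 in
open ComplexConjugate MeasureTheory in
/-- With `U` the bilateral shift, `R e_n = ρ_{|n|} e_n` (`ρ` positive, decreasing to `0`,
non-summable) and `T = [[U, R], [0, U]]`: if `u = (u₁, u₂)` is such that the functions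
`λ ↦ ⟨(T-λ)⁻¹ u, (e_j, 0)⟩` (`|λ| < 1`) all lie in `H²(𝔻)` with norms (circle `2`-means)
bounded uniformly in `j`, then `u₂ = 0`. -/
theorem stmt17 (ρ : ℕ → ℝ) (hpos : ∀ n, 0 < ρ n) (hmono : Antitone ρ)
    (hlim : Filter.Tendsto ρ Filter.atTop (nhds 0)) (hdiv : ¬ Summable ρ)
    (U R : Hl →L[ℂ] Hl)
    (hU : ∀ n : ℤ, U (e n) = e (n + 1))
    (hR : ∀ n : ℤ, R (e n) = ((ρ n.natAbs : ℝ) : ℂ) • e n)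
    (T : H2 →L[ℂ] H2)
    (hT : ∀ x : Hl × Hl, T (pair x) = pair (U x.1 + R x.2, U x.2))
    (Res : ℂ → H2 →L[ℂ] H2)
    (hRes : ∀ lam : ℂ, ‖lam‖ < 1 →
      (Res lam).comp (T - lam • ContinuousLinearMap.id ℂ H2) = ContinuousLinearMap.id ℂ H2 ∧
      (T - lam • ContinuousLinearMap.id ℂ H2).comp (Res lam) = ContinuousLinearMap.id ℂ H2)
    (u : H2)
    (hbound : ∃ C : ℝ, ∀ (j : ℤ) (r : ℝ), 0 ≤ r → r < 1 →
      (∫⁻ θ in Set.Ioc (0 : ℝ) (2 * Real.pi),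
          ENNReal.ofReal
            (‖(inner ℂ (Res ((r : ℂ) * Complex.exp (θ * Complex.I)) u) (pair (e j, 0)) : ℂ)‖ ^ 2))
        ≤ ENNReal.ofReal C) :
    ((WithLp.equiv 2 (Hl × Hl)) u).2 = 0 := by
  have hπ : (0:ℝ) < Real.pi := Real.pi_pos
  obtain ⟨C, hb⟩ := hbound
  set C' := max C 0 with hC'
  have hC'0 : (0:ℝ) ≤ C' := le_max_right _ _
  -- uniform coefficient bound
  have hcoef : ∀ (j : ℤ) (k0 : ℕ), ‖Cc ρ u j k0‖ ≤ (C' + 2*Real.pi)/(4*Real.pi) := by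
    intro j k0
    have haux : ∀ r : ℝ, 0 ≤ r → r < 1 →
        r^k0 * (2*Real.pi * ‖Cc ρ u j k0‖) ≤ (C' + 2*Real.pi)/2 := by
      intro r hr0 hr
      have hbb : (∫⁻ θ in Set.Ioc (0 : ℝ) (2 * Real.pi),
          ENNReal.ofReal (‖(fun θ : ℝ => ∑' k : ℕ,
            (conj ((r:ℂ) * Complex.exp ((θ:ℂ) * Complex.I)))^k * Cc ρ u j k) θ‖ ^ 2))
          ≤ ENNReal.ofReal C' := by
        refine le_trans (le_of_eq (lintegral_congr (fun θ => ?_)))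
          ((hb j r hr0 hr).trans (ENNReal.ofReal_le_ofReal (le_max_left C 0)))
        congr 2
        have hl : ‖(r : ℂ) * Complex.exp ((θ:ℝ) * Complex.I)‖ < 1 := by
          rw [norm_mul, Complex.norm_exp_ofReal_mul_I,
            mul_one, Complex.norm_real, Real.norm_eq_abs, abs_of_nonneg hr0]
          exact hr
        rw [inner_res ρ hpos hmono U R hU hR T hT Res hRes u _ hl j]
      have := coef_r_bound ρ hpos hmono u j k0 r hr0 hr C' hC'0 _ rfl hbb
      linarith [this]
    have h2 := le_of_forall_pow_mul (2*Real.pi * ‖Cc ρ u j k0‖) ((C' + 2*Real.pi)/2) k0 haux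
    rw [le_div_iff₀ (by positivity : (0:ℝ) < 4*Real.pi)]
    linarith
  -- main coordinatewise argument
  have main : ∀ m : ℤ, (((WithLp.equiv 2 (Hl × Hl)) u).2 : ∀ _ : ℤ, ℂ) m = 0 := by
    intro m
    set u₁ := ((WithLp.equiv 2 (Hl × Hl)) u).1 with hu₁
    set u₂ := ((WithLp.equiv 2 (Hl × Hl)) u).2 with hu₂
    by_contra hne
    have hpos2 : 0 < ‖u₂ m‖ := by
      simpa [norm_pos_iff] using hne
    set d := (m-1).natAbs with hd
    set K := (C' + 2*Real.pi)/(4*Real.pi) with hK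
    set B := K + ‖u₁ (m-1)‖ with hB
    have hsig_le : ∀ n : ℕ, sig ρ (m-2-(n:ℤ)) n * ‖u₂ m‖ ≤ B := by
      intro n
      have h1 := hcoef (m-2-(n:ℤ)) n
      have e1 : (m-2-(n:ℤ))+1+(n:ℤ) = m-1 := by ring
      have e2 : (m-2-(n:ℤ))+2+(n:ℤ) = m := by ring
      have hCc : Cc ρ u (m-2-(n:ℤ)) n
          = conj (u₁ (m-1)) - ((sig ρ (m-2-(n:ℤ)) n : ℝ) : ℂ) * conj (u₂ m) := by
        rw [Cc, ← hu₁, ← hu₂, e1, e2]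
      have h3 : sig ρ (m-2-(n:ℤ)) n * ‖u₂ m‖ - ‖u₁ (m-1)‖ ≤ ‖Cc ρ u (m-2-(n:ℤ)) n‖ := by
        rw [hCc]
        have h4 := norm_sub_norm_le (((sig ρ (m-2-(n:ℤ)) n : ℝ) : ℂ) * conj (u₂ m))
          (conj (u₁ (m-1)))
        rw [norm_sub_rev] at h4
        rw [norm_mul, Complex.norm_real, Real.norm_eq_abs,
          abs_of_nonneg (sig_nonneg ρ hpos _ n), RCLike.norm_conj, RCLike.norm_conj] at h4
        linarith
      rw [hB]
      linarith
    have hS : Filter.Tendsto (fun N : ℕ => ∑ i ∈ Finset.range N, ρ i) Filter.atTop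
        Filter.atTop :=
      (not_summable_iff_tendsto_nat_atTop_of_nonneg (fun n => (hpos n).le)).mp hdiv
    have hQ : Filter.Tendsto (fun n : ℕ => ∑ i ∈ Finset.range (n+1), ρ (d+i)) Filter.atTop
        Filter.atTop := by
      have h1 : ∀ n : ℕ, ∑ i ∈ Finset.range (n+1), ρ (d+i)
          = (∑ i ∈ Finset.range (d+(n+1)), ρ i) + (-(∑ i ∈ Finset.range d, ρ i)) := by
        intro n
        rw [Finset.sum_range_add ρ d (n+1)]
        ring
      have h2 : Filter.Tendsto (fun n : ℕ => ∑ i ∈ Finset.range (d+(n+1)), ρ i) Filter.atTop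
          Filter.atTop := by
        refine hS.comp (Filter.Tendsto.congr (f₁ := fun n : ℕ => n + (d+1)) ?_
          (Filter.tendsto_add_atTop_nat (d+1)))
        intro n
        omega
      have h3 := Filter.tendsto_atTop_add_const_right Filter.atTop
        (-(∑ i ∈ Finset.range d, ρ i)) h2
      exact h3.congr (fun n => (h1 n).symm)
    have hsig_ge : ∀ n : ℕ, (∑ i ∈ Finset.range (n+1), ρ (d+i)) ≤ sig ρ (m-2-(n:ℤ)) n := by
      intro n
      rw [sig]
      rw [← Finset.sum_range_reflect (fun i => ρ ((m-2-(n:ℤ))+1+(i:ℤ)).natAbs) (n+1)]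
      apply Finset.sum_le_sum
      intro i hi
      have hi' : i ≤ n := by
        simpa [Finset.mem_range, Nat.lt_succ_iff] using hi
      apply hmono
      have hcast : ((n + 1 - 1 - i : ℕ) : ℤ) = (n:ℤ) - (i:ℤ) := by omega
      rw [hcast]
      omega
    obtain ⟨n, hn⟩ := (hQ.eventually_gt_atTop (B / ‖u₂ m‖)).exists
    have h7 := hsig_le n
    have h8 : B / ‖u₂ m‖ < sig ρ (m-2-(n:ℤ)) n := lt_of_lt_of_le hn (hsig_ge n)
    rw [div_lt_iff₀ hpos2] at h8
    linarith
  apply lp.ext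
  funext m
  rw [main m]
  simp
end
end
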